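/- Let A = {A_1,...,A_m} ⊆ H^n with A_1 invertible. If A is ASDC, then the real algebra generated by {A_1⁻¹ A_i : i ∈ [m]} has real dimension at most n. -/

import Mathlib

open Matrix
open scoped Matrix.Norms.L2Operator


section Aux

lemma list_lift {α β : Type*} (f : α → β) (l' : List β) (h : ∀ y ∈ l', y ∈ Set.range f) :
    ∃ l : List α, l.map f = l' := by
  induction l' with
  | nil => exact ⟨[], rfl⟩
  | cons a l ih =>
    obtain ⟨i, hi⟩ := h a List.mem_cons_self
    obtain ⟨l₀, hl₀⟩ := ih (fun y hy => h y (List.mem_cons_of_mem _ hy))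
    exact ⟨i :: l₀, by simp [hi, hl₀]⟩

lemma prod_mem_aux {M : Type*} [Ring M] {R : Type*} [CommRing R] [Module R M]
    (N : Submodule R M) (h1 : (1 : M) ∈ N) (hmul : ∀ x ∈ N, ∀ y ∈ N, x * y ∈ N)
    {ι : Type*} (g : ι → M) (hg : ∀ i, g i ∈ N) :
    ∀ l : List ι, (l.map g).prod ∈ N := by
  intro l
  induction l with
  | nil => simpa using h1
  | cons a l ih => simpa using hmul _ (hg a) _ ih

lemma contAt_word {n m : ℕ} (A : Fin (m + 1) → Matrix (Fin n) (Fin n) ℂ)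
    (hA1 : IsUnit (A 0)) (l : List (Fin (m + 1))) :
    ContinuousAt (fun C : Fin (m + 1) → Matrix (Fin n) (Fin n) ℂ =>
      (l.map (fun i => Ring.inverse (C 0) * C i)).prod) A := by
  obtain ⟨u, hu⟩ := hA1
  have h0 : ContinuousAt (fun C : Fin (m + 1) → Matrix (Fin n) (Fin n) ℂ => C 0) A :=
    (continuous_apply 0).continuousAt
  have hinv : ContinuousAt (fun C : Fin (m + 1) → Matrix (Fin n) (Fin n) ℂ =>
      Ring.inverse (C 0)) A := by
    have h1 : ContinuousAt Ring.inverse (A 0) := by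
      rw [← hu]; exact NormedRing.inverse_continuousAt u
    exact ContinuousAt.comp (f := fun C : Fin (m + 1) → Matrix (Fin n) (Fin n) ℂ => C 0) (x := A) h1 h0
  induction l with
  | nil => simpa using continuousAt_const
  | cons a l ih =>
    simp only [List.map_cons, List.prod_cons]
    exact (hinv.mul ((continuous_apply a).continuousAt)).mul ih

end Aux


lemma sdc_exists_submodule {n m : ℕ} (C : Fin (m + 1) → Matrix (Fin n) (Fin n) ℂ)
    (hherm : ∀ i, (C i).IsHermitian) (hC0 : IsUnit (C 0))
    (P : Matrix (Fin n) (Fin n) ℂ) (hP : IsUnit P) (hdiag : ∀ i, (Pᴴ * C i * P).IsDiag) :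
    ∃ N : Submodule ℝ (Matrix (Fin n) (Fin n) ℂ), Module.finrank ℝ N ≤ n ∧
      (1 : Matrix (Fin n) (Fin n) ℂ) ∈ N ∧ (∀ x ∈ N, ∀ y ∈ N, x * y ∈ N) ∧
      ∀ i, (C 0)⁻¹ * C i ∈ N := by
  classical
  have hPdet : IsUnit P.det := (Matrix.isUnit_iff_isUnit_det P).mp hP
  have hPHdet : IsUnit Pᴴ.det := by rw [Matrix.det_conjTranspose]; exact hPdet.star
  have hPH : IsUnit Pᴴ := (Matrix.isUnit_iff_isUnit_det _).mpr hPHdet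
  have hC0det : IsUnit (C 0).det := (Matrix.isUnit_iff_isUnit_det _).mp hC0
  set d : Fin (m + 1) → Fin n → ℝ := fun i k => RCLike.re ((Pᴴ * C i * P) k k) with hd
  have hD : ∀ i, Pᴴ * C i * P = Matrix.diagonal (fun k => (d i k : ℂ)) := by
    intro i
    have hh : (Pᴴ * C i * P).IsHermitian := Matrix.isHermitian_conjTranspose_mul_mul P (hherm i)
    have h1 : (fun k => ((d i k : ℝ) : ℂ)) = (Pᴴ * C i * P).diag := hh.coe_re_diag
    rw [h1]
    exact ((hdiag i).diagonal_diag).symm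
  have hC : ∀ i, C i = Pᴴ⁻¹ * Matrix.diagonal (fun k => (d i k : ℂ)) * P⁻¹ := by
    intro i
    rw [← hD i]
    rw [show Pᴴ⁻¹ * (Pᴴ * C i * P) * P⁻¹ = (Pᴴ⁻¹ * Pᴴ) * (C i * (P * P⁻¹)) by
      simp only [Matrix.mul_assoc],
      Matrix.nonsing_inv_mul _ hPHdet, Matrix.mul_nonsing_inv _ hPdet, one_mul, mul_one]
  have hd0 : ∀ k, d 0 k ≠ 0 := by
    intro k hk
    have hu : IsUnit (Matrix.diagonal (fun k => ((d 0 k : ℝ) : ℂ))) := by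
      rw [← hD 0]
      exact (hPH.mul hC0).mul hP
    have hudet : IsUnit (Matrix.diagonal (fun k => ((d 0 k : ℝ) : ℂ))).det :=
      (Matrix.isUnit_iff_isUnit_det _).mp hu
    rw [Matrix.det_diagonal] at hudet
    have h2 := hudet.ne_zero
    rw [Finset.prod_ne_zero_iff] at h2
    exact h2 k (Finset.mem_univ k) (by rw [hk]; norm_num)
  -- conjugation identities
  have hconj : ∀ Q X Y : Matrix (Fin n) (Fin n) ℂ,
      (Q * X * P⁻¹) * (P * Y * P⁻¹) = Q * (X * Y) * P⁻¹ := by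
    intro Q X Y
    calc (Q * X * P⁻¹) * (P * Y * P⁻¹) = Q * (X * ((P⁻¹ * P) * (Y * P⁻¹))) := by
          simp only [Matrix.mul_assoc]
      _ = Q * (X * Y) * P⁻¹ := by
          rw [Matrix.nonsing_inv_mul _ hPdet, one_mul, Matrix.mul_assoc, Matrix.mul_assoc]
  have hdd : ∀ a b : Fin n → ℝ,
      Matrix.diagonal (fun k => ((a k : ℝ) : ℂ)) * Matrix.diagonal (fun k => ((b k : ℝ) : ℂ)) =
        Matrix.diagonal (fun k => (((a * b) k : ℝ) : ℂ)) := by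
    intro a b
    rw [Matrix.diagonal_mul_diagonal]
    congr 1
    funext k
    simp [Pi.mul_apply]
  -- the linear map
  let φ : (Fin n → ℝ) →ₗ[ℝ] Matrix (Fin n) (Fin n) ℂ :=
    (LinearMap.mulRight ℝ P⁻¹) ∘ₗ (LinearMap.mulLeft ℝ P) ∘ₗ
      (Matrix.diagonalLinearMap (Fin n) ℝ ℂ) ∘ₗ
      (LinearMap.pi fun k => Complex.ofRealAm.toLinearMap.comp (LinearMap.proj k))
  have hφ : ∀ e : Fin n → ℝ, φ e = P * Matrix.diagonal (fun k => (e k : ℂ)) * P⁻¹ :=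
    fun _ => rfl
  refine ⟨LinearMap.range φ, ?_, ?_, ?_, ?_⟩
  · exact le_trans (LinearMap.finrank_range_le φ) (by simp)
  · refine ⟨1, ?_⟩
    rw [hφ]
    rw [show (fun k => (((1 : Fin n → ℝ) k : ℝ) : ℂ)) = (fun _ => (1 : ℂ)) by funext k; norm_num]
    rw [Matrix.diagonal_one, mul_one, Matrix.mul_nonsing_inv _ hPdet]
  · rintro x ⟨a, rfl⟩ y ⟨b, rfl⟩
    refine ⟨a * b, ?_⟩
    rw [hφ, hφ, hφ, hconj, hdd]
  · intro i
    refine ⟨fun k => d i k / d 0 k, ?_⟩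
    have hkey : C 0 * φ (fun k => d i k / d 0 k) = C i := by
      rw [hφ, hC 0, hC i, hconj, hdd]
      rw [show (fun k => (((d 0 * fun k => d i k / d 0 k) k : ℝ) : ℂ)) =
          (fun k => ((d i k : ℝ) : ℂ)) by
        funext k
        rw [Pi.mul_apply, mul_div_cancel₀ _ (hd0 k)]]
    calc φ (fun k => d i k / d 0 k)
        = ((C 0)⁻¹ * C 0) * φ (fun k => d i k / d 0 k) := by
          rw [Matrix.nonsing_inv_mul _ hC0det, one_mul]
      _ = (C 0)⁻¹ * (C 0 * φ (fun k => d i k / d 0 k)) := by rw [Matrix.mul_assoc]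
      _ = (C 0)⁻¹ * C i := by rw [hkey]

/-- If `{A_1, ..., A_m}` is an ASDC set of Hermitian matrices with `A_1` invertible, then
the real unital algebra generated by `{A_1⁻¹ * A_i}` has real dimension at most `n`. -/
theorem asdc_imp_real_algebra_dim_le
    {n m : ℕ} (A : Fin (m + 1) → Matrix (Fin n) (Fin n) ℂ)
    (hherm : ∀ i, (A i).IsHermitian) (hA1 : IsUnit (A 0))
    (hASDC : ∀ ε > (0 : ℝ), ∃ At : Fin (m + 1) → Matrix (Fin n) (Fin n) ℂ,
      (∀ i, (At i).IsHermitian) ∧ (∀ i, ‖A i - At i‖ ≤ ε) ∧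
      ∃ P : Matrix (Fin n) (Fin n) ℂ, IsUnit P ∧ ∀ i, (Pᴴ * At i * P).IsDiag) :
    Module.finrank ℝ
      (Algebra.adjoin ℝ (Set.range fun i => (A 0)⁻¹ * A i)) ≤ n := by
  classical
  by_contra hle
  push_neg at hle
  set B : Fin (m + 1) → (Matrix (Fin n) (Fin n) ℂ) := (fun i => (A 0)⁻¹ * A i) with hB
  have hspan : n < Module.finrank ℝ
      ↥(Submodule.span ℝ ((Submonoid.closure (Set.range B) : Submonoid (Matrix (Fin n) (Fin n) ℂ)) : Set (Matrix (Fin n) (Fin n) ℂ))) := by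
    refine lt_of_lt_of_le hle (le_of_eq ?_)
    rw [← Algebra.adjoin_eq_span]
    rfl
  -- extract n+1 linearly independent elements of the monoid closure
  obtain ⟨b, hb_sub, hb_span, hb_ind⟩ :=
    exists_linearIndependent ℝ ((Submonoid.closure (Set.range B) : Submonoid (Matrix (Fin n) (Fin n) ℂ)) : Set (Matrix (Fin n) (Fin n) ℂ))
  rw [← hb_span] at hspan
  obtain ⟨t, ht_sub, ht_card⟩ : ∃ t : Finset (Matrix (Fin n) (Fin n) ℂ), ↑t ⊆ b ∧ t.card = n + 1 := by
    rcases Set.finite_or_infinite b with hfin | hinf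
    · haveI := hfin.fintype
      have hcard : Module.finrank ℝ ↥(Submodule.span ℝ b) = b.toFinset.card :=
        finrank_span_set_eq_card hb_ind
      obtain ⟨t, hts, htc⟩ := Finset.exists_subset_card_eq
        (show n + 1 ≤ b.toFinset.card by omega)
      exact ⟨t, fun y hy => by
        have := hts hy
        rwa [Set.mem_toFinset] at this, htc⟩
    · obtain ⟨t, hts, htc⟩ := hinf.exists_subset_card_eq (n + 1)
      exact ⟨t, hts, htc⟩
  set e := t.equivFinOfCardEq ht_card with he
  set x : Fin (n + 1) → (Matrix (Fin n) (Fin n) ℂ) := fun j => ((e.symm j : t) : (Matrix (Fin n) (Fin n) ℂ)) with hx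
  have hx_mem : ∀ j, x j ∈ Submonoid.closure (Set.range B) :=
    fun j => hb_sub (ht_sub (e.symm j).2)
  have hx_ind : LinearIndependent ℝ x := by
    have h1 : LinearIndependent ℝ (fun y : (↑t : Set (Matrix (Fin n) (Fin n) ℂ)) => (y : (Matrix (Fin n) (Fin n) ℂ))) := hb_ind.comp (Set.inclusion ht_sub) (Set.inclusion_injective ht_sub)
    have hfinj : Function.Injective
        (fun j : Fin (n + 1) => (⟨((e.symm j : t) : (Matrix (Fin n) (Fin n) ℂ)), by simp⟩ : (↑t : Set (Matrix (Fin n) (Fin n) ℂ)))) := by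
      intro a c hac
      have := congrArg Subtype.val hac
      exact e.symm.injective (Subtype.ext this)
    exact h1.comp _ hfinj
  -- represent each x j as a word in the generators
  have hlists : ∀ j, ∃ l : List (Fin (m + 1)), (l.map B).prod = x j := by
    intro j
    obtain ⟨l', hl'mem, hl'prod⟩ := Submonoid.exists_list_of_mem_closure (hx_mem j)
    obtain ⟨l, hl⟩ := list_lift B l' hl'mem
    exact ⟨l, by rw [hl, hl'prod]⟩
  choose ls hls using hlists
  set G : (Fin (m + 1) → (Matrix (Fin n) (Fin n) ℂ)) → Fin (n + 1) → (Matrix (Fin n) (Fin n) ℂ) :=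
    fun C j => ((ls j).map (fun i => Ring.inverse (C 0) * C i)).prod with hG
  have hBeq : (fun i => Ring.inverse (A 0) * A i) = B := by
    funext i
    rw [hB, Matrix.nonsing_inv_eq_ringInverse]
  have hGA : G A = x := by
    funext j
    rw [hG]
    simp only
    rw [hBeq, hls j]
  -- the set of good perturbations is a neighborhood of A
  have hGcont : ContinuousAt G A := continuousAt_pi.mpr (fun j => contAt_word A hA1 (ls j))
  have hmem1 : G ⁻¹' {f : Fin (n + 1) → (Matrix (Fin n) (Fin n) ℂ) | LinearIndependent ℝ f} ∈ nhds A := by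
    refine hGcont.preimage_mem_nhds (isOpen_setOf_linearIndependent.mem_nhds ?_)
    rw [hGA]
    exact hx_ind
  have hmem2 : (fun C : Fin (m + 1) → (Matrix (Fin n) (Fin n) ℂ) => C 0) ⁻¹' {X : (Matrix (Fin n) (Fin n) ℂ) | IsUnit X} ∈ nhds A :=
    (continuous_apply 0).continuousAt.preimage_mem_nhds (Units.isOpen.mem_nhds hA1)
  obtain ⟨δ, hδ, hball⟩ := Metric.mem_nhds_iff.mp (Filter.inter_mem hmem1 hmem2)
  -- apply ASDC with ε = δ/2
  obtain ⟨At, hAtherm, hAtclose, P, hPunit, hPdiag⟩ := hASDC (δ / 2) (by positivity)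
  have hAtU : At ∈ G ⁻¹' {f : Fin (n + 1) → (Matrix (Fin n) (Fin n) ℂ) | LinearIndependent ℝ f} ∩
      (fun C : Fin (m + 1) → (Matrix (Fin n) (Fin n) ℂ) => C 0) ⁻¹' {X : (Matrix (Fin n) (Fin n) ℂ) | IsUnit X} := by
    apply hball
    rw [Metric.mem_ball, dist_pi_lt_iff hδ]
    intro i
    have : dist (At i) (A i) = ‖A i - At i‖ := by rw [dist_eq_norm, norm_sub_rev]
    rw [this]
    calc ‖A i - At i‖ ≤ δ / 2 := hAtclose i
      _ < δ := by linarith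
  obtain ⟨hAt_ind, hAt0⟩ := hAtU
  have hAt0' : IsUnit (At 0) := hAt0
  -- the SDC dimension bound
  obtain ⟨N, hNrank, hN1, hNmul, hNgen⟩ := sdc_exists_submodule At hAtherm hAt0' P hPunit hPdiag
  have hmemN : ∀ j, G At j ∈ N := by
    intro j
    rw [hG]
    simp only
    rw [show (fun i => Ring.inverse (At 0) * At i) = (fun i => (At 0)⁻¹ * At i) by
      funext i; rw [Matrix.nonsing_inv_eq_ringInverse]]
    exact prod_mem_aux N hN1 hNmul _ hNgen (ls j)
  set y : Fin (n + 1) → N := fun j => ⟨G At j, hmemN j⟩ with hy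
  have hy_ind : LinearIndependent ℝ y := by
    apply LinearIndependent.of_comp N.subtype
    exact hAt_ind
  have hcard := hy_ind.fintype_card_le_finrank
  rw [Fintype.card_fin] at hcard
  omega
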